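/- Suppose the iterated kernels satisfy f_{n,ε}(x,y) ≤ C₁ b̄_ε^{n+d/α} n^{−d/α} for all n ≥ 1, x, y ∈ ℝ^d (where b̄_ε = sup_x ∫f_ε(x,y)dy, α ∈ (0,2), d ≥ 1), and Γ_ε^n φ(x) = ∫ φ(z)f_{n,ε}(x,z)dz + (b̄_ε−b_ε(x))^n φ(x). Then there is C (depending on C₁, d, α) such that for every nonnegative bounded integrable φ and t > 0: e^{tA_ε}φ(x) ≤ C t^{−d/α} ∫ φ(y) dy + e^{−t b_ε(x)} φ(x). -/

import Mathlib

open Real MeasureTheory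

lemma my_exp_tsum (x : ℝ) : Real.exp x = ∑' n : ℕ, x ^ n / (n.factorial : ℝ) := by
  rw [Real.exp_eq_exp_ℝ, NormedSpace.exp_eq_tsum_div]

lemma my_fact_le (m n : ℕ) : (n + m).factorial ≤ n.factorial * (n + m) ^ m := by
  induction m with
  | zero => simp
  | succ m ih =>
    have : (n + (m + 1)).factorial = (n + m + 1) * (n + m).factorial := by
      rw [← Nat.add_assoc, Nat.factorial_succ]
    rw [this]
    calc (n + m + 1) * (n + m).factorial ≤ (n + m + 1) * (n.factorial * (n + m) ^ m) :=
          Nat.mul_le_mul_left _ ih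
      _ ≤ (n + m + 1) * (n.factorial * (n + m + 1) ^ m) := by
          exact Nat.mul_le_mul_left _ (Nat.mul_le_mul_left _
            (Nat.pow_le_pow_left (Nat.le_succ _) m))
      _ = n.factorial * (n + (m + 1)) ^ (m + 1) := by ring_nf

lemma my_fact_le' (m n : ℕ) (hn : 1 ≤ n) :
    (n + m).factorial ≤ (m + 1) ^ m * (n.factorial * n ^ m) := by
  calc (n + m).factorial ≤ n.factorial * (n + m) ^ m := my_fact_le m n
    _ ≤ n.factorial * (n * (m + 1)) ^ m := by
        refine Nat.mul_le_mul_left _ (Nat.pow_le_pow_left ?_ m)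
        nlinarith
    _ = (m + 1) ^ m * (n.factorial * n ^ m) := by rw [Nat.mul_pow]; ring

lemma my_series (p : ℝ) (hp : 0 < p) (m : ℕ) (hpm : p ≤ m) (x0 : ℝ) (hx0 : 0 ≤ x0) :
    Summable (fun n : ℕ => x0 ^ ((n : ℝ) + p) / ((n.factorial : ℝ) * (n : ℝ) ^ p)) ∧
    ∑' n : ℕ, x0 ^ ((n : ℝ) + p) / ((n.factorial : ℝ) * (n : ℝ) ^ p)
      ≤ (1 + ((m : ℝ) + 1) ^ m) * Real.exp x0 := by
  set g : ℕ → ℝ := fun n => x0 ^ ((n : ℝ) + p) / ((n.factorial : ℝ) * (n : ℝ) ^ p) with hg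
  set h : ℕ → ℝ := fun n =>
    x0 ^ n / (n.factorial : ℝ) +
      ((m : ℝ) + 1) ^ m * (x0 ^ (n + m) / ((n + m).factorial : ℝ)) with hh
  have hg0 : ∀ n, 0 ≤ g n := fun n => by
    apply div_nonneg (Real.rpow_nonneg hx0 _)
    positivity
  have hle : ∀ n, g n ≤ h n := by
    intro n
    have hh0 : 0 ≤ h n := by
      apply add_nonneg
      · positivity
      · positivity
    rcases Nat.eq_zero_or_pos n with rfl | hn
    · simp only [hg, Nat.cast_zero]
      rw [Real.zero_rpow hp.ne']
      simpa using hh0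
    rcases eq_or_lt_of_le hx0 with hx0' | hx0'
    · simp only [hg, ← hx0']
      rw [Real.zero_rpow (by positivity)]
      simpa using hh0
    -- now x0 > 0, n ≥ 1
    have hnR : (0:ℝ) < (n:ℝ) := by exact_mod_cast hn
    have key : g n = x0 ^ n / (n.factorial : ℝ) * (x0 / n) ^ p := by
      show x0 ^ ((n : ℝ) + p) / ((n.factorial : ℝ) * (n : ℝ) ^ p)
        = x0 ^ n / (n.factorial : ℝ) * (x0 / (n : ℝ)) ^ p
      rw [Real.div_rpow hx0 hnR.le, Real.rpow_add hx0', Real.rpow_natCast]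
      field_simp
    have hr : (0:ℝ) ≤ x0 / n := by positivity
    have hrp : (x0 / n) ^ p ≤ 1 + (x0 / n) ^ m := by
      rcases le_or_gt (x0 / n) 1 with h1 | h1
      · have := Real.rpow_le_one hr h1 hp.le
        nlinarith [pow_nonneg hr m]
      · have : (x0 / n) ^ p ≤ (x0 / n) ^ (m : ℝ) :=
          Real.rpow_le_rpow_of_exponent_le h1.le hpm
        rw [Real.rpow_natCast] at this
        linarith
    have step1 : g n ≤ x0 ^ n / (n.factorial : ℝ) + x0 ^ n / (n.factorial : ℝ) * (x0 / n) ^ m := by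
      rw [key]
      have hpos : (0:ℝ) ≤ x0 ^ n / (n.factorial : ℝ) := by positivity
      nlinarith [mul_le_mul_of_nonneg_left hrp hpos]
    have step2 : x0 ^ n / (n.factorial : ℝ) * (x0 / n) ^ m
        ≤ ((m : ℝ) + 1) ^ m * (x0 ^ (n + m) / ((n + m).factorial : ℝ)) := by
      have hfac : ((n + m).factorial : ℝ) ≤ ((m : ℝ) + 1) ^ m * ((n.factorial : ℝ) * (n : ℝ) ^ m) := by
        have := my_fact_le' m n hn
        calc ((n + m).factorial : ℝ) ≤ (((m + 1) ^ m * (n.factorial * n ^ m) : ℕ) : ℝ) := by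
              exact_mod_cast this
          _ = ((m : ℝ) + 1) ^ m * ((n.factorial : ℝ) * (n : ℝ) ^ m) := by push_cast; ring
      have lhs_eq : x0 ^ n / (n.factorial : ℝ) * (x0 / n) ^ m
          = x0 ^ (n + m) / ((n.factorial : ℝ) * (n : ℝ) ^ m) := by
        rw [div_pow, pow_add]
        field_simp
      rw [lhs_eq, mul_div_assoc' _ _ (((n + m).factorial : ℝ)),
        div_le_div_iff₀ (by positivity) (by positivity)]
      have hx0m : (0:ℝ) ≤ x0 ^ (n + m) := by positivity
      calc x0 ^ (n + m) * ((n + m).factorial : ℝ)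
          ≤ x0 ^ (n + m) * (((m : ℝ) + 1) ^ m * ((n.factorial : ℝ) * (n : ℝ) ^ m)) :=
            mul_le_mul_of_nonneg_left hfac hx0m
        _ = ((m : ℝ) + 1) ^ m * x0 ^ (n + m) * ((n.factorial : ℝ) * (n : ℝ) ^ m) := by ring
    show g n ≤ x0 ^ n / (n.factorial : ℝ)
      + ((m : ℝ) + 1) ^ m * (x0 ^ (n + m) / ((n + m).factorial : ℝ))
    linarith
  have hs1 : Summable (fun n : ℕ => x0 ^ n / (n.factorial : ℝ)) :=
    Real.summable_pow_div_factorial x0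
  have hs2 : Summable (fun n : ℕ => x0 ^ (n + m) / (((n + m).factorial : ℝ))) := by
    exact hs1.comp_injective (add_left_injective m)
  have hsh : Summable h := hs1.add (hs2.mul_left _)
  have hsg : Summable g := Summable.of_nonneg_of_le hg0 hle hsh
  refine ⟨hsg, ?_⟩
  have h2le : ∑' n : ℕ, x0 ^ (n + m) / (((n + m).factorial : ℝ)) ≤ Real.exp x0 := by
    rw [my_exp_tsum]
    exact hs2.tsum_le_tsum_of_inj (fun n => n + m) (add_left_injective m)
      (fun c _ => by positivity) (fun n => le_refl _) hs1
  calc ∑' n, g n ≤ ∑' n, h n := hsg.tsum_le_tsum hle hsh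
    _ = (∑' n, x0 ^ n / (n.factorial : ℝ))
        + ((m : ℝ) + 1) ^ m * ∑' n, x0 ^ (n + m) / (((n + m).factorial : ℝ)) := by
        rw [hs1.tsum_add (hs2.mul_left _), tsum_mul_left]
    _ ≤ Real.exp x0 + ((m : ℝ) + 1) ^ m * Real.exp x0 := by
        rw [← my_exp_tsum x0]
        exact add_le_add le_rfl (mul_le_mul_of_nonneg_left h2le (by positivity))
    _ = (1 + ((m : ℝ) + 1) ^ m) * Real.exp x0 := by ring

theorem stmt_14 (d : ℕ) (hd : 1 ≤ d) (α : ℝ) (hα : α ∈ Set.Ioo (0:ℝ) 2)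
    (fε : EuclideanSpace ℝ (Fin d) → EuclideanSpace ℝ (Fin d) → ℝ)
    (hf0 : ∀ x y, 0 ≤ fε x y)
    (hfint : ∀ x, Integrable (fε x))
    (b : EuclideanSpace ℝ (Fin d) → ℝ) (hb : ∀ x, b x = ∫ y, fε x y)
    (B : ℝ) (hbB : ∀ x, b x ≤ B) (hB0 : 0 ≤ B)
    (F : ℕ → EuclideanSpace ℝ (Fin d) → EuclideanSpace ℝ (Fin d) → ℝ)
    (hF0 : ∀ n x y, 0 ≤ F n x y)
    (hFint : ∀ n x, Integrable (F n x))
    (C₁ : ℝ) (hC₁ : 0 < C₁)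
    (hFb : ∀ n : ℕ, 1 ≤ n → ∀ x y,
      F n x y ≤ C₁ * B ^ ((n : ℝ) + (d : ℝ) / α) * (n : ℝ) ^ (-(d : ℝ) / α))
    (Γ : (EuclideanSpace ℝ (Fin d) → ℝ) → EuclideanSpace ℝ (Fin d) → ℝ)
    (hΓn : ∀ n, 1 ≤ n → ∀ (φ : EuclideanSpace ℝ (Fin d) → ℝ) x,
      (Γ^[n] φ) x = (∫ z, φ z * F n x z) + (B - b x) ^ n * φ x) :
    ∃ C : ℝ, 0 < C ∧
      ∀ (φ : EuclideanSpace ℝ (Fin d) → ℝ) (Cφ : ℝ), Measurable φ →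
        (∀ y, 0 ≤ φ y) → (∀ y, φ y ≤ Cφ) → Integrable φ →
        ∀ t : ℝ, 0 < t → ∀ x,
          Real.exp (-t * B) * (∑' n : ℕ, t ^ n / (n.factorial : ℝ) * (Γ^[n] φ) x)
            ≤ C * t ^ (-(d : ℝ) / α) * (∫ y, φ y) + Real.exp (-t * b x) * φ x := by
  obtain ⟨hα0, hα2⟩ := hα
  set p : ℝ := (d : ℝ) / α with hpdef
  have hdR : (0:ℝ) < (d:ℝ) := by exact_mod_cast hd
  have hp : 0 < p := div_pos hdR hα0
  set m : ℕ := ⌈p⌉₊ with hmdef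
  have hpm : p ≤ (m : ℝ) := Nat.le_ceil p
  refine ⟨C₁ * (1 + ((m : ℝ) + 1) ^ m), by positivity, ?_⟩
  intro φ Cφ hφm hφ0 hφCφ hφint t ht x
  set I : ℝ := ∫ y, φ y with hIdef
  have hI0 : 0 ≤ I := integral_nonneg hφ0
  set x0 : ℝ := t * B with hx0def
  have hx00 : 0 ≤ x0 := by positivity
  obtain ⟨hgs, hgb⟩ := my_series p hp m hpm x0 hx00
  set g : ℕ → ℝ := fun n => x0 ^ ((n : ℝ) + p) / ((n.factorial : ℝ) * (n : ℝ) ^ p) with hgdef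
  set K : ℝ := C₁ * I * (t ^ p)⁻¹ with hKdef
  have htp : (0:ℝ) < t ^ p := Real.rpow_pos_of_pos ht p
  have hK0 : 0 ≤ K := by positivity
  set v : ℕ → ℝ := fun n => (t * (B - b x)) ^ n / (n.factorial : ℝ) * φ x with hvdef
  set a : ℕ → ℝ := fun n => t ^ n / (n.factorial : ℝ) * (Γ^[n] φ) x with hadef
  have hbx : b x ≤ B := hbB x
  have hΓ0 : ∀ n, 0 ≤ (Γ^[n] φ) x := by
    intro n
    rcases Nat.eq_zero_or_pos n with rfl | hn
    · simpa using hφ0 x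
    · rw [hΓn n hn φ x]
      have h1 : 0 ≤ ∫ z, φ z * F n x z :=
        integral_nonneg fun z => mul_nonneg (hφ0 z) (hF0 n x z)
      have h2 : 0 ≤ (B - b x) ^ n * φ x :=
        mul_nonneg (pow_nonneg (by linarith) n) (hφ0 x)
      linarith
  have ha0 : ∀ n, 0 ≤ a n := fun n => mul_nonneg (by positivity) (hΓ0 n)
  have hau : ∀ n, a n ≤ v n + K * g n := by
    intro n
    rcases Nat.eq_zero_or_pos n with rfl | hn
    · have hgz : g 0 = 0 := by
        simp [hgdef, Real.zero_rpow hp.ne']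
      simp [hadef, hvdef, hgz]
    · have hnR : (0:ℝ) < (n : ℝ) := by exact_mod_cast hn
      have hnp : (0:ℝ) < (n : ℝ) ^ p := Real.rpow_pos_of_pos hnR p
      set Kn : ℝ := C₁ * B ^ ((n : ℝ) + p) * ((n : ℝ) ^ p)⁻¹ with hKndef
      have hKn0 : 0 ≤ Kn := by positivity
      have hFb' : ∀ z, φ z * F n x z ≤ φ z * Kn := by
        intro z
        have h := hFb n hn x z
        rw [neg_div, Real.rpow_neg hnR.le] at h
        exact mul_le_mul_of_nonneg_left h (hφ0 z)
      have hint1 : Integrable (fun z => φ z * F n x z) := by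
        refine (hFint n x).bdd_mul hφm.aestronglyMeasurable (c := Cφ) (Filter.Eventually.of_forall fun z => ?_)
        rw [Real.norm_eq_abs, abs_of_nonneg (hφ0 z)]
        exact hφCφ z
      have hint2 : Integrable (fun z => φ z * Kn) := hφint.mul_const Kn
      have hIle : (∫ z, φ z * F n x z) ≤ I * Kn := by
        calc (∫ z, φ z * F n x z) ≤ ∫ z, φ z * Kn := integral_mono hint1 hint2 hFb'
          _ = I * Kn := integral_mul_const Kn φ
      have hΓle : (Γ^[n] φ) x ≤ I * Kn + (B - b x) ^ n * φ x := by
        rw [hΓn n hn φ x]; linarith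
      have hfac : (0:ℝ) < (n.factorial : ℝ) := by exact_mod_cast n.factorial_pos
      have step : a n ≤ t ^ n / (n.factorial : ℝ) * (I * Kn)
          + t ^ n / (n.factorial : ℝ) * ((B - b x) ^ n * φ x) := by
        have hc : (0:ℝ) ≤ t ^ n / (n.factorial : ℝ) := by positivity
        have := mul_le_mul_of_nonneg_left hΓle hc
        calc a n = t ^ n / (n.factorial : ℝ) * (Γ^[n] φ) x := rfl
          _ ≤ t ^ n / (n.factorial : ℝ) * (I * Kn + (B - b x) ^ n * φ x) := this
          _ = _ := by ring
      have hveq : t ^ n / (n.factorial : ℝ) * ((B - b x) ^ n * φ x) = v n := by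
        simp only [hvdef, mul_pow]
        ring
      have hgeq : t ^ n / (n.factorial : ℝ) * (I * Kn) = K * g n := by
        have e1 : x0 ^ ((n : ℝ) + p) = t ^ ((n : ℝ) + p) * B ^ ((n : ℝ) + p) :=
          Real.mul_rpow ht.le hB0
        have e2 : t ^ ((n : ℝ) + p) = t ^ n * t ^ p := by
          rw [Real.rpow_add ht, Real.rpow_natCast]
        simp only [hgdef, hKdef, hKndef, e1, e2]
        field_simp
      rw [hgeq, hveq] at step
      linarith [step]
  have hv : Summable v := (Real.summable_pow_div_factorial (t * (B - b x))).mul_right (φ x)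
  have hu : Summable (fun n => v n + K * g n) := hv.add (hgs.mul_left K)
  have hsa : Summable a := Summable.of_nonneg_of_le ha0 hau hu
  have htsum : ∑' n, a n ≤ Real.exp (t * (B - b x)) * φ x + K * ∑' n, g n := by
    calc ∑' n, a n ≤ ∑' n, (v n + K * g n) := hsa.tsum_le_tsum hau hu
      _ = (∑' n, v n) + K * ∑' n, g n := by
          rw [hv.tsum_add (hgs.mul_left K), tsum_mul_left]
      _ = Real.exp (t * (B - b x)) * φ x + K * ∑' n, g n := by
          congr 1
          simp only [hvdef]
          rw [tsum_mul_right, ← my_exp_tsum]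
  have hE : (0:ℝ) ≤ Real.exp (-t * B) := (Real.exp_pos _).le
  have hmain : Real.exp (-t * B) * ∑' n, a n
      ≤ Real.exp (-t * b x) * φ x
        + C₁ * (1 + ((m : ℝ) + 1) ^ m) * (t ^ p)⁻¹ * I := by
    have h1 : Real.exp (-t * B) * (Real.exp (t * (B - b x)) * φ x)
        = Real.exp (-t * b x) * φ x := by
      rw [← mul_assoc, ← Real.exp_add]
      ring_nf
    have h2 : Real.exp (-t * B) * (K * ∑' n, g n)
        ≤ C₁ * (1 + ((m : ℝ) + 1) ^ m) * (t ^ p)⁻¹ * I := by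
      have hKg : K * ∑' n, g n ≤ K * ((1 + ((m : ℝ) + 1) ^ m) * Real.exp x0) :=
        mul_le_mul_of_nonneg_left hgb hK0
      have hexp : Real.exp (-t * B) * Real.exp x0 = 1 := by
        rw [← Real.exp_add, hx0def]
        norm_num
      calc Real.exp (-t * B) * (K * ∑' n, g n)
          ≤ Real.exp (-t * B) * (K * ((1 + ((m : ℝ) + 1) ^ m) * Real.exp x0)) :=
            mul_le_mul_of_nonneg_left hKg hE
        _ = C₁ * I * (t ^ p)⁻¹ * (1 + ((m : ℝ) + 1) ^ m)
            * (Real.exp (-t * B) * Real.exp x0) := by rw [hKdef]; ring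
        _ = C₁ * (1 + ((m : ℝ) + 1) ^ m) * (t ^ p)⁻¹ * I := by rw [hexp]; ring
    calc Real.exp (-t * B) * ∑' n, a n
        ≤ Real.exp (-t * B) * (Real.exp (t * (B - b x)) * φ x + K * ∑' n, g n) :=
          mul_le_mul_of_nonneg_left htsum hE
      _ = Real.exp (-t * B) * (Real.exp (t * (B - b x)) * φ x)
          + Real.exp (-t * B) * (K * ∑' n, g n) := by ring
      _ ≤ Real.exp (-t * b x) * φ x
          + C₁ * (1 + ((m : ℝ) + 1) ^ m) * (t ^ p)⁻¹ * I := by rw [h1]; linarith [h2]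
  have hrw : t ^ (-(d : ℝ) / α) = (t ^ p)⁻¹ := by
    rw [neg_div, Real.rpow_neg ht.le]
  rw [hrw]
  linarith [hmain]
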